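/- Let Γ be a pre-automatic structure over a finite alphabet A that is an automatic cross-section, with interpretation σ : A⁺ → S. Then S is right cancellative if and only if for every a ∈ A, the relation L_a ∘ L_a⁻¹ equals the diagonal relation { (u, u) : u ∈ L } on L. -/
import Mathlib


universe u v

/-- A pre-automatic structure over an alphabet `A`: a language `L` of nonempty words
(elements of the free semigroup `A⁺`), a relation `L₌ ⊆ L × L`, and for each letter
`a ∈ A` a relation `Lₐ ⊆ L × L`. -/
structure PreAutomaticStructure (A : Type u) where
  L : Set (FreeSemigroup A)
  Leq : Set (FreeSemigroup A × FreeSemigroup A)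
  Lletter : A → Set (FreeSemigroup A × FreeSemigroup A)
  Leq_sub : Leq ⊆ L ×ˢ L
  Lletter_sub : ∀ a, Lletter a ⊆ L ×ˢ L

/-- An interpretation of a pre-automatic structure with respect to a semigroup `S`:
a semigroup homomorphism `σ : A⁺ → S` such that (i) `σ(L) = S`, (ii) `L₌` captures
equality of representatives, (iii) `Lₐ` captures right multiplication by `a`. -/
structure IsInterpretation {A : Type u} {S : Type v} [Semigroup S]
    (Γ : PreAutomaticStructure A) (σ : FreeSemigroup A →ₙ* S) : Prop where
  surj : ⇑σ '' Γ.L = Set.univ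
  eq_iff : ∀ u ∈ Γ.L, ∀ v ∈ Γ.L, ((u, v) ∈ Γ.Leq ↔ σ u = σ v)
  step_iff : ∀ (a : A), ∀ u ∈ Γ.L, ∀ v ∈ Γ.L,
    ((u, v) ∈ Γ.Lletter a ↔ σ (u * FreeSemigroup.of a) = σ v)

/-- `σ` is consistent with the assignment of generators `ι : A → L`. -/
def ConsistentWith {A : Type u} {S : Type v} [Semigroup S] (Γ : PreAutomaticStructure A)
    (σ : FreeSemigroup A →ₙ* S) (ι : A → FreeSemigroup A) : Prop :=
  (∀ a, ι a ∈ Γ.L) ∧ ∀ a, σ (ι a) = σ (FreeSemigroup.of a)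

/-- `ι : A → L` is an assignment of generators: some interpretation is consistent with it. -/
def IsAssignment {A : Type u} (Γ : PreAutomaticStructure A)
    (ι : A → FreeSemigroup A) : Prop :=
  ∃ (T : Type v) (inst : Semigroup T)
    (τ : @MulHom (FreeSemigroup A) T _ inst.toMul),
    @IsInterpretation A T inst Γ τ ∧ @ConsistentWith A T inst Γ τ ι

/-- Composition of relations: `(u, v) ∈ R ∘ R'` iff `∃ x, (u, x) ∈ R ∧ (x, v) ∈ R'`. -/
def relComp {W : Type*} (R R' : Set (W × W)) : Set (W × W) :=
  {p | ∃ x, (p.1, x) ∈ R ∧ (x, p.2) ∈ R'}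

/-- The inverse of a relation. -/
def relInv {W : Type*} (R : Set (W × W)) : Set (W × W) := {p | (p.2, p.1) ∈ R}

/-- `L_w` for a word `w` given as a list of letters: `L_ε = L₌` and
`L_{a₁⋯aₙ} = L_{a₁} ∘ ⋯ ∘ L_{aₙ}`. -/
def PreAutomaticStructure.LwordList {A : Type u} (Γ : PreAutomaticStructure A) :
    List A → Set (FreeSemigroup A × FreeSemigroup A)
  | [] => Γ.Leq
  | [a] => Γ.Lletter a
  | a :: b :: rest => relComp (Γ.Lletter a) (Γ.LwordList (b :: rest))

/-- `L_w` for a nonempty word `w ∈ A⁺`. -/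
def PreAutomaticStructure.Lword {A : Type u} (Γ : PreAutomaticStructure A)
    (w : FreeSemigroup A) : Set (FreeSemigroup A × FreeSemigroup A) :=
  Γ.LwordList (w.head :: w.tail)

/-- For an automatic cross-section: the semigroup is right cancellative iff for every
generator `a`, `L_a ∘ L_a⁻¹` is the diagonal relation on `L`. -/
theorem stmt_8 {A : Type*} [Finite A] {S : Type*} [Semigroup S]
    (Γ : PreAutomaticStructure A) (σ : FreeSemigroup A →ₙ* S)
    (hσ : IsInterpretation Γ σ) (hcs : Set.BijOn (⇑σ) Γ.L Set.univ) :
    (∀ x y s : S, x * s = y * s → x = y) ↔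
      ∀ a : A, relComp (Γ.Lletter a) (relInv (Γ.Lletter a)) =
        {p : FreeSemigroup A × FreeSemigroup A | p.1 ∈ Γ.L ∧ p.2 = p.1} := by
  obtain ⟨hsurj, heq, hstep⟩ := hσ
  constructor
  · intro hrc a
    ext ⟨u, v⟩
    simp only [Set.mem_setOf_eq, relComp, relInv]
    constructor
    · rintro ⟨x, hux, hvx⟩
      have hu := (Γ.Lletter_sub a hux).1
      have hx := (Γ.Lletter_sub a hux).2
      have hv := (Γ.Lletter_sub a hvx).1
      have h1 := (hstep a u hu x hx).1 hux
      have h2 := (hstep a v hv x hx).1 hvx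
      have h3 : σ u * σ (FreeSemigroup.of a) = σ v * σ (FreeSemigroup.of a) := by
        rw [← map_mul, ← map_mul, h1, h2]
      exact ⟨hu, hcs.injOn hv hu (hrc _ _ _ h3).symm⟩
    · rintro ⟨hu, h⟩
      have : σ (u * FreeSemigroup.of a) ∈ Set.univ := Set.mem_univ _
      rw [← hsurj] at this
      obtain ⟨x, hx, hσx⟩ := this
      have hm := (hstep a u hu x hx).2 hσx.symm
      rw [show v = u from h]
      exact ⟨x, hm, hm⟩
  · intro h
    have base : ∀ (a : A) (x y : S), x * σ (FreeSemigroup.of a) = y * σ (FreeSemigroup.of a) → x = y := by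
      intro a x y hxy
      have hx : x ∈ Set.univ := Set.mem_univ _
      rw [← hsurj] at hx
      obtain ⟨u, hu, hσu⟩ := hx
      have hy : y ∈ Set.univ := Set.mem_univ _
      rw [← hsurj] at hy
      obtain ⟨v, hv, hσv⟩ := hy
      have hw : σ (u * FreeSemigroup.of a) ∈ Set.univ := Set.mem_univ _
      rw [← hsurj] at hw
      obtain ⟨w, hwL, hσw⟩ := hw
      have h1 : (u, w) ∈ Γ.Lletter a := (hstep a u hu w hwL).2 hσw.symm
      have h2 : (v, w) ∈ Γ.Lletter a := by
        refine (hstep a v hv w hwL).2 ?_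
        rw [map_mul, hσv, ← hxy, ← hσu, ← map_mul]
        exact hσw.symm
      have hmem : ((u, v) : _ × _) ∈ relComp (Γ.Lletter a) (relInv (Γ.Lletter a)) :=
        ⟨w, h1, h2⟩
      rw [h a] at hmem
      obtain ⟨-, h3⟩ := hmem
      have h3' : v = u := h3
      rw [← hσu, ← hσv, h3']
    have key : ∀ (w : FreeSemigroup A) (x y : S), x * σ w = y * σ w → x = y := by
      intro w
      induction w using FreeSemigroup.recOnMul with
      | ih1 a => exact base a
      | ih2 p q ihp ihq =>
        intro x y hxy
        rw [map_mul, ← mul_assoc, ← mul_assoc] at hxy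
        exact ihp _ _ (ihq _ _ hxy)
    intro x y s hxy
    have hs : s ∈ Set.univ := Set.mem_univ _
    rw [← hsurj] at hs
    obtain ⟨w, hw, hσw⟩ := hs
    exact key w x y (by rw [hσw]; exact hxy)
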